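/- (Lemma 2, penalized case.) For m < n, if the changepoint vector τ is not optimal at any z for the length-m subproblem, i.e., L_m(z, τ) > L^opt_m(z) for all z ∈ R, then for all z ∈ R the penalized loss satisfies L^opt_n(z) < L_m(z, τ) + C(x(z)_{m+1:n}) + β; hence concat(τ, m) is never an optimizer of the penalized loss L_n(z, ·) for any z. -/

import Mathlib

/-- Segment mean of entries `s` through `e` of the sequence `x`. -/
noncomputable def segMean (x : ℕ → ℝ) (s e : ℕ) : ℝ :=
  (∑ i ∈ Finset.Icc s e, x i) / ((e - s + 1 : ℕ) : ℝ)

/-- Segment cost `C(x_{s:e}) = ∑_{i=s}^e (x_i - x̄_{s:e})²`. -/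
noncomputable def segCost (x : ℕ → ℝ) (s e : ℕ) : ℝ :=
  ∑ i ∈ Finset.Icc s e, (x i - segMean x s e) ^ 2

/-- The parametrized sequence `x(z) = a + b z`. -/
def paramSeq (a b : ℕ → ℝ) (z : ℝ) : ℕ → ℝ := fun i => a i + b i * z

/-- The segment boundaries `0 = τ₀ < τ₁ < ... < τ_k < τ_{k+1} = n` associated with a
changepoint vector `τ = (τ₁, ..., τ_k)`. -/
def bounds (n : ℕ) {k : ℕ} (τ : Fin k → ℕ) : Fin (k + 2) → ℕ :=
  Fin.snoc (Fin.cons 0 τ) n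

/-- `τ` is a valid `k`-dimensional changepoint vector for a length-`n` sequence:
strictly increasing with `1 ≤ τ_i ≤ n - 1`. -/
def validCP (n : ℕ) {k : ℕ} (τ : Fin k → ℕ) : Prop :=
  StrictMono τ ∧ ∀ i, 1 ≤ τ i ∧ τ i < n

/-- The segmentation loss `L_{k,n}(x, τ) = ∑_{κ=1}^{k+1} C(x_{τ_{κ-1}+1 : τ_κ})`. -/
noncomputable def cpLoss (x : ℕ → ℝ) (n : ℕ) {k : ℕ} (τ : Fin k → ℕ) : ℝ :=
  ∑ κ : Fin (k + 1), segCost x (bounds n τ κ.castSucc + 1) (bounds n τ κ.succ)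

/-- The optimal loss `L^opt_{k,n}(x) = min_{τ ∈ T_{k,n}} L_{k,n}(x, τ)`. -/
noncomputable def optLoss (x : ℕ → ℝ) (k n : ℕ) : ℝ :=
  sInf {r : ℝ | ∃ τ : Fin k → ℕ, validCP n τ ∧ r = cpLoss x n τ}

/-- The penalized loss `L_n(x, τ) = ∑_κ C(x_{τ_{κ-1}+1:τ_κ}) + β·dim(τ)`. -/
noncomputable def penLoss (x : ℕ → ℝ) (β : ℝ) (n : ℕ) {k : ℕ} (τ : Fin k → ℕ) : ℝ :=
  cpLoss x n τ + β * k

/-- The penalized optimal loss `L^opt_n(x) = min_{τ ∈ T_n} L_n(x, τ)` over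
changepoint vectors of any dimension. -/
noncomputable def optPenLoss (x : ℕ → ℝ) (β : ℝ) (n : ℕ) : ℝ :=
  sInf {r : ℝ | ∃ (k : ℕ) (τ : Fin k → ℕ), validCP n τ ∧ r = penLoss x β n τ}


lemma segCost_nonneg (x : ℕ → ℝ) (s e : ℕ) : 0 ≤ segCost x s e :=
  Finset.sum_nonneg fun _ _ => sq_nonneg _

lemma cpLoss_nonneg (x : ℕ → ℝ) (n : ℕ) {k : ℕ} (τ : Fin k → ℕ) : 0 ≤ cpLoss x n τ :=
  Finset.sum_nonneg fun _ _ => segCost_nonneg _ _ _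

lemma penLoss_nonneg (x : ℕ → ℝ) {β : ℝ} (hβ : 0 ≤ β) (n : ℕ) {k : ℕ} (τ : Fin k → ℕ) :
    0 ≤ penLoss x β n τ :=
  add_nonneg (cpLoss_nonneg _ _ _) (mul_nonneg hβ (Nat.cast_nonneg _))

lemma validCP_elim0 (n : ℕ) : validCP n (Fin.elim0 : Fin 0 → ℕ) :=
  ⟨fun i => i.elim0, fun i => i.elim0⟩

lemma penSet_nonempty (x : ℕ → ℝ) (β : ℝ) (n : ℕ) :
    {r : ℝ | ∃ (k : ℕ) (τ : Fin k → ℕ), validCP n τ ∧ r = penLoss x β n τ}.Nonempty :=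
  ⟨penLoss x β n (Fin.elim0 : Fin 0 → ℕ), 0, Fin.elim0, validCP_elim0 n, rfl⟩

lemma penSet_bddBelow (x : ℕ → ℝ) {β : ℝ} (hβ : 0 ≤ β) (n : ℕ) :
    BddBelow {r : ℝ | ∃ (k : ℕ) (τ : Fin k → ℕ), validCP n τ ∧ r = penLoss x β n τ} :=
  ⟨0, by rintro r ⟨k, τ, -, rfl⟩; exact penLoss_nonneg x hβ n τ⟩

lemma optPenLoss_nonneg (x : ℕ → ℝ) {β : ℝ} (hβ : 0 ≤ β) (n : ℕ) :
    0 ≤ optPenLoss x β n :=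
  le_csInf (penSet_nonempty x β n) (by rintro r ⟨k, τ, -, rfl⟩; exact penLoss_nonneg x hβ n τ)

lemma optPenLoss_le (x : ℕ → ℝ) {β : ℝ} (hβ : 0 ≤ β) (n : ℕ) {k : ℕ} (τ : Fin k → ℕ)
    (hτ : validCP n τ) : optPenLoss x β n ≤ penLoss x β n τ :=
  csInf_le (penSet_bddBelow x hβ n) ⟨k, τ, hτ, rfl⟩

lemma bounds_snoc (n m : ℕ) {k : ℕ} (τ : Fin k → ℕ) (j : Fin (k + 2)) :
    bounds n (Fin.snoc τ m) j.castSucc = bounds m τ j := by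
  unfold bounds
  rw [Fin.snoc_castSucc, Fin.cons_snoc_eq_snoc_cons]

lemma cpLoss_snoc (x : ℕ → ℝ) (m n : ℕ) {k : ℕ} (τ : Fin k → ℕ) :
    cpLoss x n (Fin.snoc τ m) = cpLoss x m τ + segCost x (m + 1) n := by
  unfold cpLoss
  rw [Fin.sum_univ_castSucc]
  congr 1
  · refine Finset.sum_congr rfl fun κ _ => ?_
    rw [Fin.succ_castSucc, bounds_snoc, bounds_snoc]
  · rw [Fin.succ_last]
    have h1 : bounds n (Fin.snoc τ m) (Fin.last (k + 1)).castSucc = m := by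
      rw [bounds_snoc]
      unfold bounds
      rw [Fin.snoc_last]
    have h2 : bounds n (Fin.snoc τ m) (Fin.last (k + 2)) = n := by
      unfold bounds
      rw [Fin.snoc_last]
    rw [h1, h2]

lemma penLoss_snoc (x : ℕ → ℝ) (β : ℝ) (m n : ℕ) {k : ℕ} (τ : Fin k → ℕ) :
    penLoss x β n (Fin.snoc τ m) = penLoss x β m τ + segCost x (m + 1) n + β := by
  unfold penLoss
  rw [cpLoss_snoc]
  push_cast
  ring

lemma validCP_snoc {m n : ℕ} (hm : 1 ≤ m) (hmn : m < n) {k : ℕ} {τ : Fin k → ℕ}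
    (hτ : validCP m τ) : validCP n (Fin.snoc τ m) := by
  constructor
  · intro i j hij
    rcases Fin.eq_castSucc_or_eq_last j with ⟨j', rfl⟩ | rfl
    · obtain ⟨i', rfl⟩ := (Fin.eq_castSucc_or_eq_last i).resolve_right
        (fun h => absurd (h ▸ hij) (not_lt.2 (Fin.castSucc_lt_last j').le))
      simp only [Fin.snoc_castSucc]
      exact hτ.1 (by exact_mod_cast hij)
    · rcases Fin.eq_castSucc_or_eq_last i with ⟨i', rfl⟩ | rfl
      · simp only [Fin.snoc_castSucc, Fin.snoc_last]
        exact (hτ.2 i').2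
      · exact absurd hij (lt_irrefl _)
  · intro i
    rcases Fin.eq_castSucc_or_eq_last i with ⟨i', rfl⟩ | rfl
    · simp only [Fin.snoc_castSucc]
      exact ⟨(hτ.2 i').1, lt_trans (hτ.2 i').2 hmn⟩
    · simp only [Fin.snoc_last]
      exact ⟨hm, hmn⟩

/-- Lemma 2 (penalized case): for `m < n`, if `τ` is strictly suboptimal for the
length-`m` subproblem at every `z`, then for all `z` the penalized optimal loss
satisfies `L^opt_n(z) < L_m(z, τ) + C(x(z)_{m+1:n}) + β`; hence `concat(τ, m)` is
never an optimizer of the penalized loss `L_n(z, ·)` for any `z`. -/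
theorem pen_prune_concat (a b : ℕ → ℝ) (β : ℝ) (hβ : 0 < β) (k m n : ℕ)
    (τ : Fin k → ℕ) (hmn : m < n) (hτ : validCP m τ)
    (hsub : ∀ z : ℝ,
      optPenLoss (paramSeq a b z) β m < penLoss (paramSeq a b z) β m τ) :
    (∀ z : ℝ,
      optPenLoss (paramSeq a b z) β n <
        penLoss (paramSeq a b z) β m τ + segCost (paramSeq a b z) (m + 1) n + β) ∧
    (∀ z : ℝ,
      optPenLoss (paramSeq a b z) β n <
        penLoss (paramSeq a b z) β n (Fin.snoc τ m)) := by
  have hβ0 : (0 : ℝ) ≤ β := hβ.le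
  have hm : 1 ≤ m := by
    by_contra hm
    interval_cases m
    · -- m = 0 : contradiction with hsub
      have hk : k = 0 := by
        by_contra hk
        exact absurd (hτ.2 ⟨0, Nat.pos_of_ne_zero hk⟩).2 (Nat.not_lt_zero _)
      subst hk
      have h := hsub 0
      have hpen : penLoss (paramSeq a b 0) β 0 τ = penLoss (paramSeq a b 0) β 0 τ := rfl
      have hle : penLoss (paramSeq a b 0) β 0 τ ≤ optPenLoss (paramSeq a b 0) β 0 := by
        have : penLoss (paramSeq a b 0) β 0 τ = 0 := by
          unfold penLoss cpLoss
          rw [Fin.sum_univ_one]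
          have hb0 : bounds 0 τ (Fin.castSucc 0) = 0 := rfl
          have hb1 : bounds 0 τ (Fin.succ 0) = 0 := by
            unfold bounds
            rw [show (Fin.succ 0 : Fin 2) = Fin.last 1 from rfl]
            exact Fin.snoc_last _ _
          rw [hb0, hb1]
          unfold segCost
          rw [show Finset.Icc (0 + 1) 0 = (∅ : Finset ℕ) from Finset.Icc_eq_empty (by norm_num)]
          simp
        rw [this]
        exact optPenLoss_nonneg _ hβ0 0
      exact absurd (lt_of_le_of_lt hle h) (lt_irrefl _)
  have main : ∀ z : ℝ,
      optPenLoss (paramSeq a b z) β n <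
        penLoss (paramSeq a b z) β m τ + segCost (paramSeq a b z) (m + 1) n + β := by
    intro z
    obtain ⟨r, ⟨k', τ', hτ', rfl⟩, hr⟩ :=
      exists_lt_of_csInf_lt (penSet_nonempty (paramSeq a b z) β m) (hsub z)
    calc optPenLoss (paramSeq a b z) β n
        ≤ penLoss (paramSeq a b z) β n (Fin.snoc τ' m) :=
          optPenLoss_le _ hβ0 n _ (validCP_snoc hm hmn hτ')
      _ = penLoss (paramSeq a b z) β m τ' + segCost (paramSeq a b z) (m + 1) n + β :=
          penLoss_snoc _ _ _ _ _
      _ < penLoss (paramSeq a b z) β m τ + segCost (paramSeq a b z) (m + 1) n + β := by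
          linarith
  exact ⟨main, fun z => by rw [penLoss_snoc]; exact main z⟩
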